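/- For distinct transpositions a = (ij), b = (km) in S_N: the number of transpositions c ∈ C commuting with the product ab equals C(N,2) if a = b, equals C(N−4,2) + 2 if {i,j} and {k,m} are disjoint, and equals C(N−3,2) if {i,j} and {k,m} share exactly one element. -/

import Mathlib

open Equiv

private lemma swap_eq_of_pair {α : Type*} [DecidableEq α] {x y u v : α}
    (hxy : x ≠ y) (h : ({x, y} : Finset α) = {u, v}) : Equiv.swap x y = Equiv.swap u v := by
  have hx : x ∈ ({u, v} : Finset α) := h ▸ Finset.mem_insert_self x {y}
  have hy : y ∈ ({u, v} : Finset α) := h ▸ (by simp : y ∈ ({x, y} : Finset α))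
  simp only [Finset.mem_insert, Finset.mem_singleton] at hx hy
  rcases hx with rfl | rfl
  · rcases hy with rfl | rfl
    · exact absurd rfl hxy
    · rfl
  · rcases hy with rfl | rfl
    · exact Equiv.swap_comm _ _
    · exact absurd rfl hxy

private lemma commute_swap_iff {N : ℕ} (σ : Perm (Fin N)) {a b : Fin N} (hab : a ≠ b) :
    Commute (Equiv.swap a b) σ ↔ (σ a = a ∧ σ b = b) ∨ (σ a = b ∧ σ b = a) := by
  have key : Commute (Equiv.swap a b) σ ↔ Equiv.swap (σ a) (σ b) = Equiv.swap a b := by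
    rw [Equiv.swap_apply_apply, mul_inv_eq_iff_eq_mul]
    unfold Commute SemiconjBy
    exact eq_comm
  rw [key]
  constructor
  · intro h
    have hab' : σ a ≠ σ b := fun he => hab (σ.injective he)
    have hsupp : ({σ a, σ b} : Finset (Fin N)) = {a, b} := by
      rw [← Equiv.Perm.support_swap hab', ← Equiv.Perm.support_swap hab, h]
    have ha : σ a ∈ ({a, b} : Finset (Fin N)) := hsupp ▸ Finset.mem_insert_self _ _
    have hb : σ b ∈ ({a, b} : Finset (Fin N)) := hsupp ▸ (by simp : σ b ∈ ({σ a, σ b} : Finset (Fin N)))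
    simp only [Finset.mem_insert, Finset.mem_singleton] at ha hb
    rcases ha with ha | ha
    · rcases hb with hb | hb
      · exact absurd (σ.injective (ha.trans hb.symm)) hab
      · exact Or.inl ⟨ha, hb⟩
    · rcases hb with hb | hb
      · exact Or.inr ⟨ha, hb⟩
      · exact absurd (σ.injective (ha.trans hb.symm)) hab
  · rintro (⟨h1, h2⟩ | ⟨h1, h2⟩)
    · rw [h1, h2]
    · rw [h1, h2, Equiv.swap_comm]

private lemma countA {N : ℕ} (T : Finset (Fin N)) :
    {c : Perm (Fin N) | c.IsSwap ∧ c.support ⊆ T}.ncard = T.card.choose 2 := by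
  classical
  rw [← Finset.card_powersetCard 2 T, Set.ncard_eq_toFinset_card']
  refine Finset.card_bij (fun c _ => c.support) ?_ ?_ ?_
  · intro c hc
    simp only [Set.mem_toFinset, Set.mem_setOf_eq] at hc
    obtain ⟨⟨x, y, hxy, rfl⟩, hsub⟩ := hc
    rw [Finset.mem_powersetCard]
    refine ⟨hsub, ?_⟩
    rw [Equiv.Perm.support_swap hxy, Finset.card_insert_of_notMem (by simp [hxy]),
      Finset.card_singleton]
  · intro c hc d hd h
    simp only [Set.mem_toFinset, Set.mem_setOf_eq] at hc hd
    obtain ⟨x, y, hxy, rfl⟩ := hc.1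
    obtain ⟨u, v, huv, rfl⟩ := hd.1
    rw [Equiv.Perm.support_swap hxy, Equiv.Perm.support_swap huv] at h
    exact swap_eq_of_pair hxy h
  · intro s hs
    rw [Finset.mem_powersetCard] at hs
    obtain ⟨x, y, hxy, hxys⟩ := Finset.card_eq_two.mp hs.2
    refine ⟨Equiv.swap x y, ?_, ?_⟩
    · simp only [Set.mem_toFinset, Set.mem_setOf_eq]
      exact ⟨⟨x, y, hxy, rfl⟩, by rw [Equiv.Perm.support_swap hxy, ← hxys]; exact hs.1⟩
    · rw [Equiv.Perm.support_swap hxy, hxys]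

/-- three distinct points: σ = swap a b * swap b c is a 3-cycle -/
private lemma count3 {N : ℕ} {a b c : Fin N} (hab : a ≠ b) (hbc : b ≠ c) (hac : a ≠ c) :
    {c' : Perm (Fin N) | c'.IsSwap ∧ Commute c' (Equiv.swap a b * Equiv.swap b c)}.ncard
      = Nat.choose (N - 3) 2 := by
  classical
  set σ := Equiv.swap a b * Equiv.swap b c with hσ
  have hσa : σ a = b := by
    rw [hσ, Perm.mul_apply, Equiv.swap_apply_of_ne_of_ne hab hac, Equiv.swap_apply_left]
  have hσb : σ b = c := by
    rw [hσ, Perm.mul_apply, Equiv.swap_apply_left, Equiv.swap_apply_of_ne_of_ne hac.symm hbc.symm]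
  have hσc : σ c = a := by
    rw [hσ, Perm.mul_apply, Equiv.swap_apply_right, Equiv.swap_apply_right]
  have hfix : ∀ x : Fin N, x ≠ a → x ≠ b → x ≠ c → σ x = x := by
    intro x h1 h2 h3
    rw [hσ, Perm.mul_apply, Equiv.swap_apply_of_ne_of_ne h2 h3, Equiv.swap_apply_of_ne_of_ne h1 h2]
  have hset : {c' : Perm (Fin N) | c'.IsSwap ∧ Commute c' σ}
      = {c' : Perm (Fin N) | c'.IsSwap ∧ c'.support ⊆ ({a, b, c} : Finset (Fin N))ᶜ} := by
    ext e
    simp only [Set.mem_setOf_eq]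
    constructor
    · rintro ⟨⟨x, y, hxy, rfl⟩, hcom⟩
      rw [commute_swap_iff σ hxy] at hcom
      refine ⟨⟨x, y, hxy, rfl⟩, ?_⟩
      have hfix' : ∀ z : Fin N, σ z = z → z ∉ ({a, b, c} : Finset (Fin N)) := by
        intro z hz
        simp only [Finset.mem_insert, Finset.mem_singleton]
        rintro (rfl | rfl | rfl)
        · exact hab (hσa.symm.trans hz).symm
        · exact hbc (hσb.symm.trans hz).symm
        · exact hac (hσc.symm.trans hz)
      rcases hcom with ⟨h1, h2⟩ | ⟨h1, h2⟩
      · rw [Equiv.Perm.support_swap hxy, Finset.insert_subset_iff, Finset.singleton_subset_iff]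
        exact ⟨Finset.mem_compl.mpr (hfix' x h1), Finset.mem_compl.mpr (hfix' y h2)⟩
      · -- show impossible: σ x = y, σ y = x with x ≠ y
        exfalso
        by_cases hx : x = a ∨ x = b ∨ x = c
        · rcases hx with rfl | rfl | rfl
          · rw [hσa] at h1; subst h1; exact hac (hσb.symm.trans h2).symm
          · rw [hσb] at h1; subst h1; exact hab (hσc.symm.trans h2)
          · rw [hσc] at h1; subst h1; exact hbc (hσa.symm.trans h2)
        · push_neg at hx
          exact hxy ((hfix x hx.1 hx.2.1 hx.2.2) ▸ h1)
    · rintro ⟨⟨x, y, hxy, rfl⟩, hsub⟩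
      refine ⟨⟨x, y, hxy, rfl⟩, ?_⟩
      rw [commute_swap_iff σ hxy]
      rw [Equiv.Perm.support_swap hxy, Finset.insert_subset_iff, Finset.singleton_subset_iff] at hsub
      obtain ⟨hx, hy⟩ := hsub
      simp only [Finset.mem_compl, Finset.mem_insert, Finset.mem_singleton] at hx hy
      push_neg at hx hy
      exact Or.inl ⟨hfix x hx.1 hx.2.1 hx.2.2, hfix y hy.1 hy.2.1 hy.2.2⟩
  have hc3 : ({a, b, c} : Finset (Fin N)).card = 3 := by
    rw [Finset.card_insert_of_notMem (by simp [hab, hac]),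
      Finset.card_insert_of_notMem (by simp [hbc]), Finset.card_singleton]
  rw [hset, countA, Finset.card_compl, Fintype.card_fin, hc3]

theorem stmt_12 (N : ℕ) (i j p q : Fin N) (hij : i ≠ j) (hpq : p ≠ q) :
    ((({i, j} : Finset (Fin N)) ∩ {p, q}).card = 2 →
      {c : Perm (Fin N) | c.IsSwap ∧
        Commute c (Equiv.swap i j * Equiv.swap p q)}.ncard = Nat.choose N 2) ∧
    ((({i, j} : Finset (Fin N)) ∩ {p, q}).card = 0 →
      {c : Perm (Fin N) | c.IsSwap ∧
        Commute c (Equiv.swap i j * Equiv.swap p q)}.ncard = Nat.choose (N - 4) 2 + 2) ∧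
    ((({i, j} : Finset (Fin N)) ∩ {p, q}).card = 1 →
      {c : Perm (Fin N) | c.IsSwap ∧
        Commute c (Equiv.swap i j * Equiv.swap p q)}.ncard = Nat.choose (N - 3) 2) := by
  classical
  refine ⟨?_, ?_, ?_⟩
  · -- card 2: {i,j} = {p,q}
    intro h2
    have hpair : ({i, j} : Finset (Fin N)) = {p, q} := by
      have hij2 : ({i, j} : Finset (Fin N)).card = 2 := by
        rw [Finset.card_insert_of_notMem (by simp [hij]), Finset.card_singleton]
      have hpq2 : ({p, q} : Finset (Fin N)).card = 2 := by
        rw [Finset.card_insert_of_notMem (by simp [hpq]), Finset.card_singleton]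
      have hsub : ({i, j} : Finset (Fin N)) ∩ {p, q} = {i, j} :=
        Finset.eq_of_subset_of_card_le Finset.inter_subset_left (by omega)
      have hsub2 : ({i, j} : Finset (Fin N)) ⊆ {p, q} := by
        rw [← hsub]; exact Finset.inter_subset_right
      exact Finset.eq_of_subset_of_card_le hsub2 (by omega)
    have hswap : Equiv.swap i j = Equiv.swap p q := swap_eq_of_pair hij hpair
    have : Equiv.swap i j * Equiv.swap p q = 1 := by rw [← hswap, Equiv.swap_mul_self]
    rw [this]
    have hset : {c : Perm (Fin N) | c.IsSwap ∧ Commute c 1}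
        = {c : Perm (Fin N) | c.IsSwap ∧ c.support ⊆ (Finset.univ : Finset (Fin N))} := by
      ext e; simp [Commute.one_right]
    rw [hset, countA, Finset.card_univ, Fintype.card_fin]
  · -- disjoint case
    intro h0
    have hd : i ≠ p ∧ i ≠ q ∧ j ≠ p ∧ j ≠ q := by
      rw [Finset.card_eq_zero, Finset.eq_empty_iff_forall_notMem] at h0
      refine ⟨?_, ?_, ?_, ?_⟩
      · rintro rfl; exact h0 i (by simp)
      · rintro rfl; exact h0 i (by simp)
      · rintro rfl; exact h0 j (by simp)
      · rintro rfl; exact h0 j (by simp)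
    obtain ⟨hip, hiq, hjp, hjq⟩ := hd
    set σ := Equiv.swap i j * Equiv.swap p q with hσ
    have hσi : σ i = j := by
      rw [hσ, Perm.mul_apply, Equiv.swap_apply_of_ne_of_ne hip hiq, Equiv.swap_apply_left]
    have hσj : σ j = i := by
      rw [hσ, Perm.mul_apply, Equiv.swap_apply_of_ne_of_ne hjp hjq, Equiv.swap_apply_right]
    have hσp : σ p = q := by
      rw [hσ, Perm.mul_apply, Equiv.swap_apply_left, Equiv.swap_apply_of_ne_of_ne hiq.symm hjq.symm]
    have hσq : σ q = p := by
      rw [hσ, Perm.mul_apply, Equiv.swap_apply_right, Equiv.swap_apply_of_ne_of_ne hip.symm hjp.symm]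
    have hfix : ∀ x : Fin N, x ≠ i → x ≠ j → x ≠ p → x ≠ q → σ x = x := by
      intro x h1 h2 h3 h4
      rw [hσ, Perm.mul_apply, Equiv.swap_apply_of_ne_of_ne h3 h4, Equiv.swap_apply_of_ne_of_ne h1 h2]
    have hset : {c : Perm (Fin N) | c.IsSwap ∧ Commute c σ}
        = {c : Perm (Fin N) | c.IsSwap ∧ c.support ⊆ ({i, j, p, q} : Finset (Fin N))ᶜ}
          ∪ {Equiv.swap i j, Equiv.swap p q} := by
      ext e
      simp only [Set.mem_setOf_eq, Set.mem_union, Set.mem_insert_iff, Set.mem_singleton_iff]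
      constructor
      · rintro ⟨⟨x, y, hxy, rfl⟩, hcom⟩
        rw [commute_swap_iff σ hxy] at hcom
        rcases hcom with ⟨h1, h2⟩ | ⟨h1, h2⟩
        · left
          refine ⟨⟨x, y, hxy, rfl⟩, ?_⟩
          have hfix' : ∀ z : Fin N, σ z = z → z ∉ ({i, j, p, q} : Finset (Fin N)) := by
            intro z hz
            simp only [Finset.mem_insert, Finset.mem_singleton]
            rintro (rfl | rfl | rfl | rfl)
            · exact hij (hσi.symm.trans hz).symm
            · exact hij (hσj.symm.trans hz)
            · exact hpq (hσp.symm.trans hz).symm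
            · exact hpq (hσq.symm.trans hz)
          rw [Equiv.Perm.support_swap hxy, Finset.insert_subset_iff, Finset.singleton_subset_iff]
          exact ⟨Finset.mem_compl.mpr (hfix' x h1), Finset.mem_compl.mpr (hfix' y h2)⟩
        · right
          by_cases hx : x = i ∨ x = j ∨ x = p ∨ x = q
          · rcases hx with rfl | rfl | rfl | rfl
            · rw [hσi] at h1; subst h1; left; rfl
            · rw [hσj] at h1; subst h1; left; exact Equiv.swap_comm _ _
            · rw [hσp] at h1; subst h1; right; rfl
            · rw [hσq] at h1; subst h1; right; exact Equiv.swap_comm _ _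
          · push_neg at hx
            exact absurd ((hfix x hx.1 hx.2.1 hx.2.2.1 hx.2.2.2) ▸ h1) hxy
      · rintro (⟨⟨x, y, hxy, rfl⟩, hsub⟩ | rfl | rfl)
        · refine ⟨⟨x, y, hxy, rfl⟩, ?_⟩
          rw [commute_swap_iff σ hxy]
          rw [Equiv.Perm.support_swap hxy, Finset.insert_subset_iff,
            Finset.singleton_subset_iff] at hsub
          obtain ⟨hx, hy⟩ := hsub
          simp only [Finset.mem_compl, Finset.mem_insert, Finset.mem_singleton] at hx hy
          push_neg at hx hy
          exact Or.inl ⟨hfix x hx.1 hx.2.1 hx.2.2.1 hx.2.2.2,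
            hfix y hy.1 hy.2.1 hy.2.2.1 hy.2.2.2⟩
        · exact ⟨⟨i, j, hij, rfl⟩, (commute_swap_iff σ hij).mpr (Or.inr ⟨hσi, hσj⟩)⟩
        · exact ⟨⟨p, q, hpq, rfl⟩, (commute_swap_iff σ hpq).mpr (Or.inr ⟨hσp, hσq⟩)⟩
    rw [hset]
    have hdisj : Disjoint {c : Perm (Fin N) | c.IsSwap ∧ c.support ⊆ ({i, j, p, q} : Finset (Fin N))ᶜ}
        ({Equiv.swap i j, Equiv.swap p q} : Set (Perm (Fin N))) := by
      rw [Set.disjoint_right]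
      rintro e (rfl | rfl) ⟨_, hsub⟩
      · have : i ∈ ({i, j, p, q} : Finset (Fin N))ᶜ := hsub (by
          rw [Equiv.Perm.support_swap hij]; simp)
        simp at this
      · have : p ∈ ({i, j, p, q} : Finset (Fin N))ᶜ := hsub (by
          rw [Equiv.Perm.support_swap hpq]; simp)
        simp at this
    rw [Set.ncard_union_eq hdisj (Set.toFinite _) (Set.toFinite _), countA]
    have hcard2 : ({Equiv.swap i j, Equiv.swap p q} : Set (Perm (Fin N))).ncard = 2 := by
      apply Set.ncard_pair
      intro h
      have := congrArg Equiv.Perm.support h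
      rw [Equiv.Perm.support_swap hij, Equiv.Perm.support_swap hpq] at this
      have : i ∈ ({p, q} : Finset (Fin N)) := this ▸ (by simp)
      simp only [Finset.mem_insert, Finset.mem_singleton] at this
      rcases this with rfl | rfl
      · exact hip rfl
      · exact hiq rfl
    have hc4 : ({i, j, p, q} : Finset (Fin N)).card = 4 := by
      rw [Finset.card_insert_of_notMem (by simp [hij, hip, hiq]),
        Finset.card_insert_of_notMem (by simp [hjp, hjq]),
        Finset.card_insert_of_notMem (by simp [hpq]), Finset.card_singleton]
    rw [hcard2, Finset.card_compl, Fintype.card_fin, hc4]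
  · -- shared one point
    intro h1
    obtain ⟨x, hx⟩ := Finset.card_eq_one.mp h1
    have hxij : x ∈ ({i, j} : Finset (Fin N)) := by
      have : x ∈ ({i, j} : Finset (Fin N)) ∩ {p, q} := hx ▸ Finset.mem_singleton_self x
      exact Finset.mem_of_mem_inter_left this
    have hxpq : x ∈ ({p, q} : Finset (Fin N)) := by
      have : x ∈ ({i, j} : Finset (Fin N)) ∩ {p, q} := hx ▸ Finset.mem_singleton_self x
      exact Finset.mem_of_mem_inter_right this
    have hnotboth : ∀ z : Fin N, z ∈ ({i, j} : Finset (Fin N)) → z ∈ ({p, q} : Finset (Fin N)) → z = x := by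
      intro z hz1 hz2
      have : z ∈ ({i, j} : Finset (Fin N)) ∩ {p, q} := Finset.mem_inter.mpr ⟨hz1, hz2⟩
      rw [hx] at this
      exact Finset.mem_singleton.mp this
    simp only [Finset.mem_insert, Finset.mem_singleton] at hxij hxpq
    -- normalize to form swap a x * swap x c with a, x, c distinct
    have key : ∀ a c : Fin N, a ≠ x → c ≠ x → a ≠ c →
        Equiv.swap i j * Equiv.swap p q = Equiv.swap a x * Equiv.swap x c →
        {c' : Perm (Fin N) | c'.IsSwap ∧
          Commute c' (Equiv.swap i j * Equiv.swap p q)}.ncard = Nat.choose (N - 3) 2 := by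
      intro a c ha hc hac heq
      rw [heq]
      exact count3 ha (Ne.symm hc) hac
    rcases hxij with rfl | rfl
    · -- x = i
      have hjx : j ≠ x := Ne.symm hij
      rcases hxpq with rfl | rfl
      · -- p = x : σ = swap x j * swap x q = swap j x * swap x q
        have hjq : j ≠ q := by
          intro h; subst h
          exact hij (hnotboth j (by simp) (by simp [hpq])).symm
        exact key j q hjx (Ne.symm hpq) hjq
          (by rw [Equiv.swap_comm x j])
      · -- q = x : σ = swap x j * swap p x = swap j x * swap x p
        have hjp : j ≠ p := by
          intro h; subst h
          exact hij (hnotboth j (by simp) (by simp)).symm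
        exact key j p hjx hpq hjp
          (by rw [Equiv.swap_comm x j, Equiv.swap_comm p x])
    · -- x = j
      have hix : i ≠ x := hij
      rcases hxpq with rfl | rfl
      · -- p = x : σ = swap i x * swap x q
        have hiq : i ≠ q := by
          intro h; subst h
          exact hij (hnotboth i (by simp) (by simp [hpq]))
        exact key i q hix (Ne.symm hpq) hiq rfl
      · -- q = x : σ = swap i x * swap p x = swap i x * swap x p
        have hip : i ≠ p := by
          intro h; subst h
          exact hij (hnotboth i (by simp) (by simp))
        exact key i p hix hpq hip (by rw [Equiv.swap_comm p x])
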